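/- Let Φ(t) := F_β(v_q + γt(e_2 - e_1)) for t ∈ [0,1], where F_β(x) = -(1/2)|x|² + (1/β)∑ x_k log x_k on the simplex and v_q has first two coordinates both equal to v_1 > 1/β. With γ := v_1 - 1/β > 0, Φ'(t) = γ·(φ(v_1 - γt) - φ(v_1 + γt)) < 0 for all t ∈ (0,1), where φ(s) = s - (1/β)log s. -/

import Mathlib

open Real Finset Set

set_option maxHeartbeats 1000000 in
/-- Along the linear trajectory `t ↦ v + γ t (e_ℓ - e_k)` starting from a point
`v` on the simplex with `v k = v ℓ = v₁ > 1/β`, the function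
`Φ(t) = F_β(v + γ t (e_ℓ - e_k))` has derivative
`Φ'(t) = γ (φ(v₁ - γ t) - φ(v₁ + γ t)) < 0` on `(0,1)`, where `γ = v₁ - 1/β`. -/
theorem descent_from_saddle (q : ℕ) (hq : 3 ≤ q) (β : ℝ) (hβq : (q : ℝ) < β)
    (φ : ℝ → ℝ) (hφ : ∀ s, φ s = s - (1 / β) * Real.log s)
    (F : (Fin q → ℝ) → ℝ)
    (hF : ∀ x : Fin q → ℝ,
      F x = -(1 / 2) * (∑ m, (x m) ^ 2) + (1 / β) * ∑ m, x m * Real.log (x m))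
    (v : Fin q → ℝ) (hvpos : ∀ m, 0 < v m) (hvsum : ∑ m, v m = 1)
    (k ℓ : Fin q) (hkl : k ≠ ℓ) (v₁ : ℝ) (hvk : v k = v₁) (hvl : v ℓ = v₁)
    (hv₁ : 1 / (q : ℝ) < v₁) (hv₁' : v₁ < 1)
    (γ : ℝ) (hγ : γ = v₁ - 1 / β) (hsum : v₁ + γ < 1)
    (Φ : ℝ → ℝ)
    (hΦ : ∀ t, Φ t = F (fun m => v m + γ * t *
      ((if m = ℓ then 1 else 0) - (if m = k then 1 else 0)))) :
    ∀ t ∈ Set.Ioo (0 : ℝ) 1,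
      HasDerivAt Φ (γ * (φ (v₁ - γ * t) - φ (v₁ + γ * t))) t ∧
      γ * (φ (v₁ - γ * t) - φ (v₁ + γ * t)) < 0 := by
  have hq0 : (0 : ℝ) < q := by positivity
  have hβ0 : (0 : ℝ) < β := lt_trans hq0 hβq
  have hβinv : 1 / β < 1 / q := one_div_lt_one_div_of_lt hq0 hβq
  have hβv : 1 / β < v₁ := lt_trans hβinv hv₁
  have hγ0 : 0 < γ := by rw [hγ]; linarith
  set c : Fin q → ℝ := fun m => (if m = ℓ then 1 else 0) - (if m = k then 1 else 0) with hc
  set G : ℝ → ℝ := fun s => -(1 / 2) * s ^ 2 + (1 / β) * (s * Real.log s) with hG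
  have hΦ' : Φ = fun t => ∑ m, G (v m + γ * t * c m) := by
    funext t
    rw [hΦ, hF]
    simp only [hG, hc, Finset.sum_add_distrib, Finset.mul_sum]
  intro t ht
  obtain ⟨ht0, ht1⟩ := ht
  have hγt0 : 0 < γ * t := mul_pos hγ0 ht0
  have hγtγ : γ * t < γ := by nlinarith
  have ha : 1 / β < v₁ - γ * t := by rw [hγ] at hγtγ ⊢; linarith
  have ha0 : 0 < v₁ - γ * t := lt_trans (by positivity) ha
  have hb0 : 0 < v₁ + γ * t := by linarith
  -- derivative of each summand
  have hder : ∀ m : Fin q, HasDerivAt (fun t => G (v m + γ * t * c m))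
      ((γ * c m) * (-(v m + γ * t * c m) + (1 / β) * (Real.log (v m + γ * t * c m) + 1))) t := by
    intro m
    have hx0 : 0 < v m + γ * t * c m := by
      rcases eq_or_ne m k with rfl | hmk
      · have : c m = -1 := by simp [hc, hkl]
        rw [this, hvk]; linarith [ha0]
      rcases eq_or_ne m ℓ with rfl | hml
      · have : c m = 1 := by simp [hc, hmk]
        rw [this, hvl]; linarith
      · have : c m = 0 := by simp [hc, hmk, hml]
        rw [this]; simpa using hvpos m
    have hlin : HasDerivAt (fun t : ℝ => v m + γ * t * c m) (γ * c m) t := by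
      have : HasDerivAt (fun t : ℝ => v m + γ * t * c m) (0 + γ * 1 * c m) t :=
        (hasDerivAt_const t (v m)).add (((hasDerivAt_id t).const_mul γ).mul_const (c m))
      simpa using this
    have hGd : HasDerivAt G (-(1/2) * (2 * (v m + γ * t * c m)) +
        (1 / β) * (Real.log (v m + γ * t * c m) + 1)) (v m + γ * t * c m) := by
      have h1 : HasDerivAt (fun s : ℝ => s ^ 2) (2 * (v m + γ * t * c m)) (v m + γ * t * c m) := by
        simpa using (hasDerivAt_pow 2 (v m + γ * t * c m))
      have h2 := Real.hasDerivAt_mul_log (ne_of_gt hx0)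
      exact (h1.const_mul (-(1/2))).add (h2.const_mul (1 / β))
    have := hGd.comp t hlin
    convert this using 1
    · rfl
    · rfl
    · rfl
    · ring
  have hsumder : HasDerivAt Φ
      (∑ m, (γ * c m) * (-(v m + γ * t * c m) + (1 / β) * (Real.log (v m + γ * t * c m) + 1))) t := by
    rw [hΦ']
    exact HasDerivAt.fun_sum (fun m _ => hder m)
  have hck : c k = -1 := by simp [hc, hkl]
  have hcl : c ℓ = 1 := by simp [hc, hkl.symm]
  have hval : (∑ m, (γ * c m) * (-(v m + γ * t * c m) + (1 / β) * (Real.log (v m + γ * t * c m) + 1)))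
      = γ * (φ (v₁ - γ * t) - φ (v₁ + γ * t)) := by
    rw [Finset.sum_eq_add_of_mem k ℓ (Finset.mem_univ k) (Finset.mem_univ ℓ) hkl
      (by intro m _ hm
          have : c m = 0 := by simp [hc, hm.1, hm.2]
          rw [this]; ring)]
    rw [hck, hcl, hvk, hvl, hφ, hφ]
    ring_nf
  rw [hval] at hsumder
  refine ⟨hsumder, ?_⟩
  have hφab : φ (v₁ - γ * t) < φ (v₁ + γ * t) := by
    set a := v₁ - γ * t
    set b := v₁ + γ * t
    have hab : a < b := by simp only [a, b]; linarith
    have hlog : Real.log b - Real.log a ≤ b / a - 1 := by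
      have := Real.log_le_sub_one_of_pos (show 0 < b / a by positivity)
      rwa [Real.log_div (ne_of_gt hb0) (ne_of_gt ha0)] at this
    have hβa : 1 < β * a := by
      have := (div_lt_iff₀ hβ0).mp ha
      nlinarith
    rw [hφ, hφ]
    have key : (1 / β) * (Real.log b - Real.log a) < b - a := by
      have h1 : (1 / β) * (Real.log b - Real.log a) ≤ (1 / β) * (b / a - 1) := by
        apply mul_le_mul_of_nonneg_left hlog (by positivity)
      have h2 : (1 / β) * (b / a - 1) = (b - a) / (β * a) := by
        field_simp
      have h3 : (b - a) / (β * a) < b - a := by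
        rw [div_lt_iff₀ (by nlinarith)]
        nlinarith
      linarith
    linarith
  exact mul_neg_of_pos_of_neg hγ0 (sub_neg.mpr hφab)
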